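/- Let S ⊆ [d] and for each j ∈ S let q_j : ℝ_{≥0} → [0,1] be nondecreasing and concave. Then the function h(x) = 1 − ∏_{j∈S}(1 − q_j(x_j)) is nonnegative, monotone, and DR-submodular on 𝒳. -/

import Mathlib

/-- `x` lies in the lattice `𝒳`: each coordinate is a nonnegative integer multiple of `δ`. -/
def InLattice {d : ℕ} (δ : ℝ) (x : Fin d → ℝ) : Prop := ∀ i, ∃ n : ℕ, x i = n * δ

/-- The `i`-th standard unit vector of `ℝ^d`. -/
def eVec {d : ℕ} (i : Fin d) : Fin d → ℝ := Pi.single i 1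

lemma concave_diff {f : ℝ → ℝ} (hf : ConcaveOn ℝ (Set.Ici 0) f)
    {a b δ : ℝ} (ha : 0 ≤ a) (hab : a ≤ b) (hδ : 0 < δ) :
    f (b + δ) - f b ≤ f (a + δ) - f a := by
  rcases eq_or_lt_of_le hab with rfl | hab
  · exact le_of_eq rfl
  · have hb : (0:ℝ) ≤ b := le_trans ha hab.le
    set c := b + δ - a with hc_def
    have hc : 0 < c := by simp only [hc_def]; linarith
    set s := (b - a)/c with hs_def
    set t := δ/c with ht_def
    have hs : 0 ≤ s := div_nonneg (by linarith) hc.le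
    have ht : 0 ≤ t := div_nonneg hδ.le hc.le
    have hst : s + t = 1 := by
      field_simp [hs_def, ht_def]
      rw [hs_def, ht_def, ← add_div, div_eq_one_iff_eq hc.ne', hc_def]; ring
    have hts : t + s = 1 := by linarith
    have hma : a ∈ Set.Ici (0:ℝ) := ha
    have hmb : b + δ ∈ Set.Ici (0:ℝ) := by simp; linarith
    have h1 := hf.2 hma hmb hs ht hst
    have h2 := hf.2 hma hmb ht hs hts
    have e1 : s • a + t • (b + δ) = a + δ := by
      simp only [smul_eq_mul, hs_def, ht_def]
      field_simp
      ring
    have e2 : t • a + s • (b + δ) = b := by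
      simp only [smul_eq_mul, hs_def, ht_def]
      field_simp
      ring
    rw [e1] at h1
    rw [e2] at h2
    simp only [smul_eq_mul] at h1 h2
    have h3 := add_le_add h1 h2
    have e3 : s * f a + t * f (b + δ) + (t * f a + s * f (b + δ))
        = f a + f (b + δ) := by linear_combination (f a + f (b + δ)) * hst
    linarith

/-- Let `S ⊆ [d]` and for each `j ∈ S` let `q j : ℝ_{≥0} → [0,1]` be nondecreasing and
concave. Then `h(x) = 1 − ∏_{j∈S}(1 − q j (x j))` is nonnegative, monotone, and
DR-submodular on `𝒳`. -/
theorem activation_nonneg_monotone_DRsubmodular {d : ℕ} (hd : 1 ≤ d) (δ : ℝ) (hδ : 0 < δ)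
    (S : Finset (Fin d)) (q : Fin d → ℝ → ℝ)
    (hrange : ∀ j ∈ S, ∀ t : ℝ, 0 ≤ t → q j t ∈ Set.Icc (0 : ℝ) 1)
    (hmono : ∀ j ∈ S, MonotoneOn (q j) (Set.Ici (0 : ℝ)))
    (hconc : ∀ j ∈ S, ConcaveOn ℝ (Set.Ici (0 : ℝ)) (q j))
    (h : (Fin d → ℝ) → ℝ)
    (hh : ∀ x, h x = 1 - ∏ j ∈ S, (1 - q j (x j))) :
    (∀ x, InLattice δ x → 0 ≤ h x) ∧
    (∀ x y, InLattice δ x → InLattice δ y → x ≤ y → h x ≤ h y) ∧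
    (∀ x y, InLattice δ x → InLattice δ y → x ≤ y → ∀ i : Fin d,
      h (y + δ • eVec i) - h y ≤ h (x + δ • eVec i) - h x) := by
  -- coordinates of lattice points are nonnegative
  have hnn : ∀ (x : Fin d → ℝ), InLattice δ x → ∀ i, 0 ≤ x i := by
    intro x hx i
    obtain ⟨n, hn⟩ := hx i
    rw [hn]
    positivity
  -- factor bounds
  have hfac : ∀ (x : Fin d → ℝ), (∀ i, 0 ≤ x i) → ∀ j ∈ S,
      0 ≤ 1 - q j (x j) ∧ 1 - q j (x j) ≤ 1 := by
    intro x hx j hj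
    have := hrange j hj (x j) (hx j)
    constructor <;> [linarith [this.2]; linarith [this.1]]
  -- coordinates of shifted points
  have hcoord : ∀ (x : Fin d → ℝ) (i j : Fin d),
      (x + δ • eVec i) j = if j = i then x j + δ else x j := by
    intro x i j
    by_cases hji : j = i
    · subst hji; simp [eVec, Pi.single_eq_same]
    · simp [eVec, Pi.single_eq_of_ne hji, hji]
  refine ⟨?_, ?_, ?_⟩
  · -- nonnegativity
    intro x hx
    rw [hh]
    have : ∏ j ∈ S, (1 - q j (x j)) ≤ 1 :=
      Finset.prod_le_one (fun j hj => (hfac x (hnn x hx) j hj).1)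
        (fun j hj => (hfac x (hnn x hx) j hj).2)
    linarith
  · -- monotonicity
    intro x y hx hy hxy
    rw [hh, hh]
    have : ∏ j ∈ S, (1 - q j (y j)) ≤ ∏ j ∈ S, (1 - q j (x j)) := by
      apply Finset.prod_le_prod
      · exact fun j hj => (hfac y (hnn y hy) j hj).1
      · intro j hj
        have := hmono j hj (hnn x hx j) (hnn y hy j) (hxy j)
        linarith
    linarith
  · -- DR-submodularity
    intro x y hx hy hxy i
    have hxnn := hnn x hx
    have hynn := hnn y hy
    by_cases hiS : i ∈ S
    · -- split off factor i
      have key : ∀ (z : Fin d → ℝ), (∀ j, 0 ≤ z j) →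
          h (z + δ • eVec i) - h z
            = (q i (z i + δ) - q i (z i)) * ∏ j ∈ S.erase i, (1 - q j (z j)) := by
        intro z hz
        rw [hh, hh]
        have hz' : ∏ j ∈ S, (1 - q j ((z + δ • eVec i) j))
            = (1 - q i (z i + δ)) * ∏ j ∈ S.erase i, (1 - q j (z j)) := by
          rw [← Finset.mul_prod_erase S _ hiS, hcoord z i i, if_pos rfl]
          congr 1
          apply Finset.prod_congr rfl
          intro j hj
          rw [hcoord z i j, if_neg (Finset.ne_of_mem_erase hj)]
        rw [hz', ← Finset.mul_prod_erase S (fun j => 1 - q j (z j)) hiS]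
        ring
      rw [key x hxnn, key y hynn]
      have hR : ∀ (z : Fin d → ℝ), (∀ j, 0 ≤ z j) →
          0 ≤ ∏ j ∈ S.erase i, (1 - q j (z j)) := by
        intro z hz
        exact Finset.prod_nonneg fun j hj =>
          (hfac z hz j (Finset.mem_of_mem_erase hj)).1
      have hRle : ∏ j ∈ S.erase i, (1 - q j (y j)) ≤ ∏ j ∈ S.erase i, (1 - q j (x j)) := by
        apply Finset.prod_le_prod
        · exact fun j hj => (hfac y hynn j (Finset.mem_of_mem_erase hj)).1
        · intro j hj
          have hjS := Finset.mem_of_mem_erase hj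
          have := hmono j hjS (hxnn j) (hynn j) (hxy j)
          linarith
      have hA0 : 0 ≤ q i (y i + δ) - q i (y i) := by
        have := hmono i hiS (hynn i) (by simp; linarith [hynn i] : y i + δ ∈ Set.Ici (0:ℝ))
          (by linarith)
        linarith
      have hAle : q i (y i + δ) - q i (y i) ≤ q i (x i + δ) - q i (x i) :=
        concave_diff (hconc i hiS) (hxnn i) (hxy i) hδ
      have hA0' : 0 ≤ q i (x i + δ) - q i (x i) := le_trans hA0 hAle
      exact mul_le_mul hAle hRle (hR y hynn) hA0'
    · -- i ∉ S : both differences are zero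
      have key : ∀ (z : Fin d → ℝ), h (z + δ • eVec i) = h z := by
        intro z
        rw [hh, hh]
        congr 1
        apply Finset.prod_congr rfl
        intro j hj
        have hji : j ≠ i := fun hji => hiS (hji ▸ hj)
        rw [hcoord z i j, if_neg hji]
      rw [key x, key y]
      simp
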